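/- arXiv:quant-ph/0106099 — 3 statements merged into one kernel-verified Lean document; each statement's English description precedes it below -/
import Mathlib

section
/- For any α ∈ ℝ³ with α₁² + α₂² + α₃² = (2π)², we have exp(-2πi I_z) · exp(-i(α₁ I_x + α₂ I_y + α₃ I_z)) = 1, the 2×2 identity matrix. -/
open Matrix NormedSpace Real
open scoped Matrix Kronecker

noncomputable section

def Ix : Matrix (Fin 2) (Fin 2) ℂ := (1/2 : ℂ) • !![0, 1; 1, 0]
def Iy : Matrix (Fin 2) (Fin 2) ℂ := (1/2 : ℂ) • !![0, -Complex.I; Complex.I, 0]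
def Iz : Matrix (Fin 2) (Fin 2) ℂ := (1/2 : ℂ) • !![1, 0; 0, -1]

/-- If `J` squares to `-1`, then `exp ℂ (π • J) = -1`, by transporting
`Complex.exp (π * I) = -1` along the real algebra map `ℂ →ₐ[ℝ] Matrix _ _ ℂ` sending `I` to `J`. -/
lemma exp_pi_smul_of_sq (J : Matrix (Fin 2) (Fin 2) ℂ) (hJ : J * J = -1) :
    NormedSpace.exp ((Real.pi : ℝ) • J) = -1 := by
  letI : SeminormedRing (Matrix (Fin 2) (Fin 2) ℂ) := Matrix.linftyOpSemiNormedRing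
  letI : NormedRing (Matrix (Fin 2) (Fin 2) ℂ) := Matrix.linftyOpNormedRing
  letI : NormedAlgebra ℝ (Matrix (Fin 2) (Fin 2) ℂ) := Matrix.linftyOpNormedAlgebra
  let f : ℂ →ₐ[ℝ] Matrix (Fin 2) (Fin 2) ℂ := Complex.lift ⟨J, hJ⟩
  have hf : Continuous f := f.toLinearMap.continuous_of_finiteDimensional
  have h1 : NormedSpace.exp ((Real.pi : ℝ) • J) = NormedSpace.exp ((Real.pi : ℝ) • J) := by
    rfl
  have h2 : f ((Real.pi : ℝ) • Complex.I) = (Real.pi : ℝ) • J := by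
    rw [_root_.map_smul]
    simp [f, Complex.liftAux_apply_I]
  have h3 : ((Real.pi : ℝ) • Complex.I : ℂ) = (Real.pi : ℂ) * Complex.I :=
    Complex.real_smul
  rw [h1, ← h2]
  refine (Eq.trans ?_ (map_exp f hf ((Real.pi : ℝ) • Complex.I)).symm).trans ?_
  · rfl
  rw [← Complex.exp_eq_exp_ℂ, h3,
    Complex.exp_pi_mul_I, map_neg, _root_.map_one]

theorem exp_z_exp_pauli_sphere_eq_one (α₁ α₂ α₃ : ℝ)
    (h : α₁ ^ 2 + α₂ ^ 2 + α₃ ^ 2 = (2 * Real.pi) ^ 2) :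
    NormedSpace.exp ((-(2 * (Real.pi : ℂ) * Complex.I)) • Iz) *
      NormedSpace.exp (-(Complex.I • ((α₁ : ℂ) • Ix + (α₂ : ℂ) • Iy + (α₃ : ℂ) • Iz))) =
      (1 : Matrix (Fin 2) (Fin 2) ℂ) := by
  have hC : (α₁:ℂ)^2 + (α₂:ℂ)^2 + (α₃:ℂ)^2 = (2*(Real.pi:ℂ))^2 := by exact_mod_cast h
  set S : Matrix (Fin 2) (Fin 2) ℂ :=
    (α₁ : ℂ) • Ix + (α₂ : ℂ) • Iy + (α₃ : ℂ) • Iz with hSdef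
  have hSS : S * S = ((Real.pi:ℂ)^2) • 1 := by
    rw [hSdef]
    ext i j
    fin_cases i <;> fin_cases j <;>
      simp [Ix, Iy, Iz, Matrix.mul_apply, Fin.sum_univ_two, Matrix.one_apply] <;>
      first
        | ring1
        | linear_combination hC / 4 - ((α₂:ℂ) ^ 2 / 4) * Complex.I_sq
  -- first factor
  have e1 : (-(2 * (Real.pi : ℂ) * Complex.I)) • Iz
      = (Real.pi : ℝ) • ((-(2:ℂ) * Complex.I) • Iz) := by
    ext i j
    fin_cases i <;> fin_cases j <;> simp [Iz, Complex.real_smul] <;> ring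
  have e2 : ((-(2:ℂ) * Complex.I) • Iz) * ((-(2:ℂ) * Complex.I) • Iz) = -1 := by
    ext i j
    fin_cases i <;> fin_cases j <;>
      simp [Iz, Matrix.mul_apply, Fin.sum_univ_two, Matrix.one_apply] <;> ring_nf <;>
      simp [Complex.I_sq]
  -- second factor
  set M : Matrix (Fin 2) (Fin 2) ℂ := -(Complex.I • S) with hMdef
  have hMM : M * M = -(((Real.pi:ℂ)^2) • 1) := by
    rw [hMdef, show -(Complex.I • S) = (-Complex.I) • S from (neg_smul _ _).symm,
      smul_mul_smul_comm, hSS, neg_mul_neg, Complex.I_mul_I, neg_smul, one_smul]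
  set J₂ : Matrix (Fin 2) (Fin 2) ℂ := (Real.pi⁻¹ : ℝ) • M with hJdef
  have e3 : M = (Real.pi : ℝ) • J₂ := (smul_inv_smul₀ Real.pi_ne_zero M).symm
  have e4 : J₂ * J₂ = -1 := by
    rw [hJdef, smul_mul_smul_comm, hMM]
    ext i j
    fin_cases i <;> fin_cases j <;>
      simp [Matrix.one_apply, Complex.real_smul] <;>
      field_simp [Complex.ofReal_ne_zero.mpr Real.pi_ne_zero] <;>
      ring1
  rw [e1, e3, exp_pi_smul_of_sq _ e2, exp_pi_smul_of_sq _ e4, neg_mul_neg, one_mul]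
end
end

section
/- If A, B, C are n×n complex matrices satisfying [A,B] = C, [B,C] = A, [C,A] = B, then for all real t, exp(tA) exp(sB) exp(-tA) = exp(s(B cos t + C sin t)) for all real s. -/
open Matrix NormedSpace Real

noncomputable section

namespace ExpConjSo3

variable {n : ℕ}

attribute [local instance] Matrix.linftyOpNormedRing Matrix.linftyOpNormedAlgebra

lemma exp_intertwine (X D P : Matrix (Fin n) (Fin n) ℂ) (h : X * P = P * D) :
    NormedSpace.exp X * P = P * NormedSpace.exp D := by
  have hpow : ∀ k : ℕ, X ^ k * P = P * D ^ k := by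
    intro k
    induction k with
    | zero => simp
    | succ k ih =>
      rw [pow_succ, pow_succ, mul_assoc, h, ← mul_assoc, ih, mul_assoc]
  simp only [exp_eq_tsum ℂ]
  erw [← (expSeries_summable' (𝕂 := ℂ) X).tsum_mul_right P,
    ← (expSeries_summable' (𝕂 := ℂ) D).tsum_mul_left P]
  congr 1
  funext k
  rw [smul_mul_assoc, hpow k, mul_smul_comm]

lemma exp_conj_of_bracket (A P : Matrix (Fin n) (Fin n) ℂ) (c : ℂ) (t : ℝ)
    (h : A * P = P * A + c • P) :
    NormedSpace.exp ((t : ℂ) • A) * P * NormedSpace.exp ((-t : ℂ) • A) = Complex.exp ((t : ℂ) * c) • P := by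
  have hmul : NormedSpace.exp ((t : ℂ) • A) * NormedSpace.exp ((-t : ℂ) • A) = 1 := by
    rw [← Matrix.exp_add_of_commute]
    · norm_num
    · exact (Commute.refl A).smul_left _ |>.smul_right _
  have hint : ((t : ℂ) • A) * P = P * ((t : ℂ) • A + ((t : ℂ) * c) • 1) := by
    rw [smul_mul_assoc, h]
    rw [mul_add, mul_smul_comm, smul_add, mul_smul_comm, mul_one, smul_smul]
  have hcomm : Commute ((t : ℂ) • A) (((t : ℂ) * c) • (1 : Matrix (Fin n) (Fin n) ℂ)) :=
    (Commute.one_right A).smul_left _ |>.smul_right _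
  have hscal : NormedSpace.exp ((((t : ℂ) * c)) • (1 : Matrix (Fin n) (Fin n) ℂ)) =
      Complex.exp ((t : ℂ) * c) • (1 : Matrix (Fin n) (Fin n) ℂ) := by
    rw [← Algebra.algebraMap_eq_smul_one, ← Algebra.algebraMap_eq_smul_one,
      Complex.exp_eq_exp_ℂ]
    exact (NormedSpace.algebraMap_exp_comm _).symm
  have hd : NormedSpace.exp ((t : ℂ) • A + ((t : ℂ) * c) • 1) =
      Complex.exp ((t : ℂ) * c) • NormedSpace.exp ((t : ℂ) • A) := by
    rw [Matrix.exp_add_of_commute _ _ hcomm, hscal, mul_smul_comm, mul_one]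
  rw [exp_intertwine _ _ _ hint, hd]
  rw [mul_smul_comm, smul_mul_assoc, mul_assoc, hmul, mul_one]

end ExpConjSo3

open ExpConjSo3 Complex in
theorem exp_conj_exp_so3 {n : ℕ} (A B C : Matrix (Fin n) (Fin n) ℂ)
    (hAB : A * B - B * A = C) (hBC : B * C - C * B = A) (hCA : C * A - A * C = B)
    (t s : ℝ) :
    NormedSpace.exp ((t : ℂ) • A) * NormedSpace.exp ((s : ℂ) • B) * NormedSpace.exp ((-t : ℂ) • A) =
      NormedSpace.exp ((s : ℂ) • ((Real.cos t : ℂ) • B + (Real.sin t : ℂ) • C)) := by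
  letI : SeminormedRing (Matrix (Fin n) (Fin n) ℂ) := Matrix.linftyOpSemiNormedRing
  letI : NormedRing (Matrix (Fin n) (Fin n) ℂ) := Matrix.linftyOpNormedRing
  letI : NormedAlgebra ℂ (Matrix (Fin n) (Fin n) ℂ) := Matrix.linftyOpNormedAlgebra
  have h1 : A * B = B * A + C := by linear_combination (norm := noncomm_ring) hAB
  have h2 : A * C = C * A - B := by linear_combination (norm := noncomm_ring) - hCA
  have hP : A * (B + Complex.I • C) =
      (B + Complex.I • C) * A + (-Complex.I) • (B + Complex.I • C) := by
    simp only [mul_add, add_mul, mul_smul_comm, smul_mul_assoc, smul_add, smul_sub, smul_smul,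
      Complex.I_mul_I, neg_mul, neg_neg, neg_smul, one_smul, h1, h2]
    abel
  have hQ : A * (B - Complex.I • C) =
      (B - Complex.I • C) * A + Complex.I • (B - Complex.I • C) := by
    simp only [mul_sub, sub_mul, mul_add, add_mul, mul_smul_comm, smul_mul_assoc, smul_add,
      smul_sub, smul_smul, Complex.I_mul_I, neg_mul, neg_neg, neg_smul, one_smul, h1, h2]
    abel
  have keyP := exp_conj_of_bracket A (B + Complex.I • C) (-Complex.I) t hP
  have keyQ := exp_conj_of_bracket A (B - Complex.I • C) Complex.I t hQ
  have e1 : ((t : ℂ) * -Complex.I) = -(t : ℂ) * Complex.I := by ring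
  rw [e1] at keyP
  have hB : (B : Matrix (Fin n) (Fin n) ℂ) =
      (2⁻¹ : ℂ) • ((B + Complex.I • C) + (B - Complex.I • C)) := by module
  have keyB : NormedSpace.exp ((t : ℂ) • A) * B * NormedSpace.exp ((-t : ℂ) • A) =
      (Real.cos t : ℂ) • B + (Real.sin t : ℂ) • C := by
    have hsplit : NormedSpace.exp ((t : ℂ) • A) * B * NormedSpace.exp ((-t : ℂ) • A) =
        (2⁻¹ : ℂ) • (NormedSpace.exp ((t : ℂ) • A) * (B + Complex.I • C) * NormedSpace.exp ((-t : ℂ) • A))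
        + (2⁻¹ : ℂ) • (NormedSpace.exp ((t : ℂ) • A) * (B - Complex.I • C) * NormedSpace.exp ((-t : ℂ) • A)) := by
      conv_lhs => rw [hB]
      simp only [smul_add, add_mul, mul_add, smul_mul_assoc, mul_smul_comm]
    rw [hsplit, keyP, keyQ]
    have hc : (Real.cos t : ℂ) =
        2⁻¹ * Complex.exp (-(t : ℂ) * Complex.I) + 2⁻¹ * Complex.exp ((t : ℂ) * Complex.I) := by
      rw [Complex.ofReal_cos, Complex.cos]; ring
    have hs : (Real.sin t : ℂ) =
        2⁻¹ * Complex.exp (-(t : ℂ) * Complex.I) * Complex.I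
        - 2⁻¹ * Complex.exp ((t : ℂ) * Complex.I) * Complex.I := by
      rw [Complex.ofReal_sin, Complex.sin]; ring
    rw [hc, hs]
    module
  have hmul1 : NormedSpace.exp ((t : ℂ) • A) * NormedSpace.exp ((-t : ℂ) • A) = 1 := by
    rw [← Matrix.exp_add_of_commute]
    · norm_num
    · exact (Commute.refl A).smul_left _ |>.smul_right _
  have hmul2 : NormedSpace.exp ((-t : ℂ) • A) * NormedSpace.exp ((t : ℂ) • A) = 1 := by
    rw [← Matrix.exp_add_of_commute]
    · norm_num
    · exact (Commute.refl A).smul_left _ |>.smul_right _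
  set U : (Matrix (Fin n) (Fin n) ℂ)ˣ :=
    ⟨NormedSpace.exp ((t : ℂ) • A), NormedSpace.exp ((-t : ℂ) • A), hmul1, hmul2⟩ with hU
  have harg : (U : Matrix (Fin n) (Fin n) ℂ) * ((s : ℂ) • B) * (↑U⁻¹ : Matrix (Fin n) (Fin n) ℂ)
      = (s : ℂ) • ((Real.cos t : ℂ) • B + (Real.sin t : ℂ) • C) := by
    show NormedSpace.exp ((t : ℂ) • A) * ((s : ℂ) • B) * NormedSpace.exp ((-t : ℂ) • A) = _
    rw [mul_smul_comm, smul_mul_assoc, keyB]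
  calc NormedSpace.exp ((t : ℂ) • A) * NormedSpace.exp ((s : ℂ) • B) * NormedSpace.exp ((-t : ℂ) • A)
      = (U : Matrix (Fin n) (Fin n) ℂ) * NormedSpace.exp ((s : ℂ) • B)
        * (↑U⁻¹ : Matrix (Fin n) (Fin n) ℂ) := rfl
    _ = NormedSpace.exp ((U : Matrix (Fin n) (Fin n) ℂ) * ((s : ℂ) • B)
        * (↑U⁻¹ : Matrix (Fin n) (Fin n) ℂ)) := (Matrix.exp_units_conj U _).symm
    _ = NormedSpace.exp ((s : ℂ) • ((Real.cos t : ℂ) • B + (Real.sin t : ℂ) • C)) := by rw [harg]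
end
end

section
/- In the 8-dimensional three-spin system, the operators A = -i(I_{1z}I_{2x} + I_{2x}I_{3z}), B = -i(I_{1z}I_{2y} + I_{2y}I_{3z}), C = -i(2 I_{1z}I_{2z}I_{3z} + I_{2z}/2) satisfy the so(3) relations [A,B] = C, [B,C] = A, [C,A] = B. -/
open Matrix NormedSpace Real
open scoped Matrix Kronecker

noncomputable section

abbrev Spin3 := Matrix (Fin 2 × Fin 2 × Fin 2) (Fin 2 × Fin 2 × Fin 2) ℂ

/-- The operator acting as `P`, `Q`, `R` on the three tensor factors of `(ℂ²)⊗³`. -/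
def triple (P Q R : Matrix (Fin 2) (Fin 2) ℂ) : Spin3 := P ⊗ₖ (Q ⊗ₖ R)

def I1x : Spin3 := triple Ix 1 1
def I1y : Spin3 := triple Iy 1 1
def I1z : Spin3 := triple Iz 1 1
def I2x : Spin3 := triple 1 Ix 1
def I2y : Spin3 := triple 1 Iy 1
def I2z : Spin3 := triple 1 Iz 1
def I3x : Spin3 := triple 1 1 Ix
def I3y : Spin3 := triple 1 1 Iy
def I3z : Spin3 := triple 1 1 Iz


lemma tm (P Q R P' Q' R' : Matrix (Fin 2) (Fin 2) ℂ) :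
    triple P Q R * triple P' Q' R' = triple (P*P') (Q*Q') (R*R') := by
  simp [triple, ← Matrix.mul_kronecker_mul]

lemma ts1 (c : ℂ) (P Q R : Matrix (Fin 2) (Fin 2) ℂ) :
    triple (c • P) Q R = c • triple P Q R := by
  simp [triple, Matrix.smul_kronecker]

lemma ts2 (c : ℂ) (P Q R : Matrix (Fin 2) (Fin 2) ℂ) :
    triple P (c • Q) R = c • triple P Q R := by
  simp [triple, Matrix.smul_kronecker, Matrix.kronecker_smul]

lemma ts3 (c : ℂ) (P Q R : Matrix (Fin 2) (Fin 2) ℂ) :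
    triple P Q (c • R) = c • triple P Q R := by
  simp [triple, Matrix.smul_kronecker, Matrix.kronecker_smul]

lemma hzz : Iz * Iz = (1/4 : ℂ) • (1 : Matrix (Fin 2) (Fin 2) ℂ) := by
  simp [Iz, Matrix.smul_mul, Matrix.mul_smul, Matrix.mul_fin_two, smul_smul]
  ext i j; fin_cases i <;> fin_cases j <;> simp [Matrix.one_apply] <;> norm_num

lemma hxy : Ix * Iy = (Complex.I/2) • Iz := by
  simp [Ix, Iy, Iz, Matrix.smul_mul, Matrix.mul_smul, Matrix.mul_fin_two, smul_smul]
  simp [Complex.ext_iff] <;> ring_nf <;> simp [Complex.I_sq] <;> norm_num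

lemma hyx : Iy * Ix = (-(Complex.I/2)) • Iz := by
  simp [Ix, Iy, Iz, Matrix.smul_mul, Matrix.mul_smul, Matrix.mul_fin_two, smul_smul]
  simp [Complex.ext_iff] <;> ring_nf <;> simp [Complex.I_sq] <;> norm_num

lemma hyz : Iy * Iz = (Complex.I/2) • Ix := by
  simp [Ix, Iy, Iz, Matrix.smul_mul, Matrix.mul_smul, Matrix.mul_fin_two, smul_smul]
  simp [Complex.ext_iff] <;> ring_nf <;> simp [Complex.I_sq] <;> norm_num

lemma hzy : Iz * Iy = (-(Complex.I/2)) • Ix := by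
  simp [Ix, Iy, Iz, Matrix.smul_mul, Matrix.mul_smul, Matrix.mul_fin_two, smul_smul]
  simp [Complex.ext_iff] <;> ring_nf <;> simp [Complex.I_sq] <;> norm_num

lemma hzx : Iz * Ix = (Complex.I/2) • Iy := by
  simp [Ix, Iy, Iz, Matrix.smul_mul, Matrix.mul_smul, Matrix.mul_fin_two, smul_smul]
  simp [Complex.ext_iff] <;> ring_nf <;> simp [Complex.I_sq] <;> norm_num

lemma hxz : Ix * Iz = (-(Complex.I/2)) • Iy := by
  simp [Ix, Iy, Iz, Matrix.smul_mul, Matrix.mul_smul, Matrix.mul_fin_two, smul_smul]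
  simp [Complex.ext_iff] <;> ring_nf <;> simp [Complex.I_sq] <;> norm_num

lemma hI3 : Complex.I ^ 3 = -Complex.I := by
  rw [pow_succ, Complex.I_sq]; ring

theorem threeSpin_so3_relations :
    let A : Spin3 := (-Complex.I) • (I1z * I2x + I2x * I3z)
    let B : Spin3 := (-Complex.I) • (I1z * I2y + I2y * I3z)
    let C : Spin3 := (-Complex.I) • ((2 : ℂ) • (I1z * I2z * I3z) + (1/2 : ℂ) • I2z)
    A * B - B * A = C ∧ B * C - C * B = A ∧ C * A - A * C = B := by
  intro A B C
  refine ⟨?_, ?_, ?_⟩ <;>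
  · show _ = _
    simp only [A, B, C, I1z, I2x, I2y, I2z, I3z, smul_mul_assoc, Matrix.mul_smul, Matrix.add_mul,
      Matrix.mul_add, tm, Matrix.one_mul, Matrix.mul_one, hzz, hxy, hyx, hyz, hzy, hzx, hxz,
      ts1, ts2, ts3]
    match_scalars <;> ring_nf <;> (try simp [hI3, neg_mul]) <;> (try ring)
end
end
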